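/- Let a > 0, d ≥ 0, and let φ ∈ C([−1,0]) satisfy φ(t) > 0 for t ∈ [−1,0) and φ(0) = d. If x : [−1,∞) → ℝ is a solution of the relay equation ẋ(t) = R(x(t−1)) with initial function φ, then x(t) = x0(t − (a + 1 + d/a)) for all t ≥ d/a, where x0 is extended T0-periodically to all of ℝ. -/

import Mathlib

/-- The relay nonlinearity: `R a x = 1` if `x ≤ 0`, and `R a x = -a` if `x > 0`. -/
noncomputable def R (a x : ℝ) : ℝ := if x ≤ 0 then 1 else -a

/-- `x : [-1,∞) → ℝ` is a solution of the relay equation `x'(t) = R a (x (t-1))`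
with initial function `φ ∈ C([-1,0])`: `x` is continuous on `[-1,∞)`, coincides
with `φ` on `[-1,0]`, and for every `t > 0` outside an exceptional set having
finitely many points in each bounded interval, `x` is differentiable at `t` with
`x'(t) = R a (x (t-1))`. -/
def IsSolution (a : ℝ) (φ x : ℝ → ℝ) : Prop :=
  ContinuousOn x (Set.Ici (-1 : ℝ)) ∧
  (∀ t ∈ Set.Icc (-1 : ℝ) 0, x t = φ t) ∧
  ∃ S : Set ℝ, (∀ A B : ℝ, (S ∩ Set.Icc A B).Finite) ∧
    ∀ t : ℝ, 0 < t → t ∉ S → HasDerivAt x (R a (x (t - 1))) t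

private lemma lin0 (x : ℝ → ℝ) (m A B : ℝ)
    (hc : ContinuousOn x (Set.Icc A B))
    (hd : ∀ t ∈ Set.Ioo A B, HasDerivAt x m t) :
    ∀ t ∈ Set.Icc A B, x t = x A + m * (t - A) := by
  intro t ht
  have hgd : ∀ s ∈ Set.Ioo A B, HasDerivAt (fun u => x u - (x A + m * (u - A))) 0 s := by
    intro s hs
    have h1 : HasDerivAt (fun u : ℝ => x A + m * (u - A)) m s := by
      simpa using ((((hasDerivAt_id s).sub_const A).const_mul m)).const_add (x A)
    have h2 := (hd s hs).sub h1
    rw [sub_self] at h2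
    exact h2
  have hgc : ContinuousOn (fun u => x u - (x A + m * (u - A))) (Set.Icc A B) := by
    apply hc.sub
    fun_prop
  have hdiff : DifferentiableOn ℝ (fun u => x u - (x A + m * (u - A)))
      (interior (Set.Icc A B)) := by
    rw [interior_Icc]
    exact fun s hs => (hgd s hs).differentiableAt.differentiableWithinAt
  have h0 : ∀ s ∈ interior (Set.Icc A B),
      deriv (fun u => x u - (x A + m * (u - A))) s = 0 := by
    rw [interior_Icc]; exact fun s hs => (hgd s hs).deriv
  have mono := monotoneOn_of_deriv_nonneg (convex_Icc A B) hgc hdiff (fun s hs => (h0 s hs).ge)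
  have anti := antitoneOn_of_deriv_nonpos (convex_Icc A B) hgc hdiff (fun s hs => (h0 s hs).le)
  have hA : A ∈ Set.Icc A B := ⟨le_rfl, le_trans ht.1 ht.2⟩
  have e1 := mono hA ht ht.1
  have e2 := anti hA ht ht.1
  have h3 : x t - (x A + m * (t - A)) = x A - (x A + m * (A - A)) := le_antisymm e2 e1
  nlinarith [h3]

private lemma lin_aux (x : ℝ → ℝ) (m : ℝ) (S : Set ℝ) :
    ∀ (n : ℕ) (A B : ℝ), ContinuousOn x (Set.Icc A B) →
      (S ∩ Set.Ioo A B).Finite → (S ∩ Set.Ioo A B).ncard ≤ n →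
      (∀ t ∈ Set.Ioo A B, t ∉ S → HasDerivAt x m t) →
      ∀ t ∈ Set.Icc A B, x t = x A + m * (t - A) := by
  intro n
  induction n with
  | zero =>
    intro A B hc hfin hcard hd
    have hemp : S ∩ Set.Ioo A B = ∅ := by
      rw [← Set.ncard_eq_zero hfin]
      omega
    refine lin0 x m A B hc (fun t ht => hd t ht ?_)
    intro hts
    have : t ∈ S ∩ Set.Ioo A B := ⟨hts, ht⟩
    rw [hemp] at this
    exact this
  | succ n ih =>
    intro A B hc hfin hcard hd
    by_cases hemp : S ∩ Set.Ioo A B = ∅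
    · refine lin0 x m A B hc (fun t ht => hd t ht ?_)
      intro hts
      have : t ∈ S ∩ Set.Ioo A B := ⟨hts, ht⟩
      rw [hemp] at this
      exact this
    · obtain ⟨s, hsS, hsI⟩ := Set.nonempty_iff_ne_empty.mpr hemp
      have sub1 : S ∩ Set.Ioo A s ⊆ (S ∩ Set.Ioo A B) \ {s} := by
        rintro y ⟨hy1, hy2⟩
        exact ⟨⟨hy1, hy2.1, hy2.2.trans hsI.2⟩, by simp; exact ne_of_lt hy2.2⟩
      have sub2 : S ∩ Set.Ioo s B ⊆ (S ∩ Set.Ioo A B) \ {s} := by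
        rintro y ⟨hy1, hy2⟩
        exact ⟨⟨hy1, hsI.1.trans hy2.1, hy2.2⟩, by simp; exact (ne_of_gt hy2.1)⟩
      have hlt : ((S ∩ Set.Ioo A B) \ {s}).ncard < (S ∩ Set.Ioo A B).ncard :=
        Set.ncard_diff_singleton_lt_of_mem ⟨hsS, hsI⟩ hfin
      have hdn : ((S ∩ Set.Ioo A B) \ {s}).ncard ≤ n := by omega
      have hfd : ((S ∩ Set.Ioo A B) \ {s}).Finite := hfin.diff
      have H1 := ih A s (hc.mono (Set.Icc_subset_Icc le_rfl hsI.2.le))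
        (hfd.subset sub1) (le_trans (Set.ncard_le_ncard sub1 hfd) hdn)
        (fun t ht hts => hd t ⟨ht.1, ht.2.trans hsI.2⟩ hts)
      have H2 := ih s B (hc.mono (Set.Icc_subset_Icc hsI.1.le le_rfl))
        (hfd.subset sub2) (le_trans (Set.ncard_le_ncard sub2 hfd) hdn)
        (fun t ht hts => hd t ⟨hsI.1.trans ht.1, ht.2⟩ hts)
      intro t ht
      rcases le_or_gt t s with h | h
      · exact H1 t ⟨ht.1, h⟩
      · have e1 := H2 t ⟨h.le, ht.2⟩
        have e2 := H1 s ⟨hsI.1.le, le_rfl⟩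
        rw [e1, e2]; ring

private lemma lin (x : ℝ → ℝ) (m : ℝ) (S : Set ℝ) (A B : ℝ)
    (hfin : (S ∩ Set.Icc A B).Finite)
    (hc : ContinuousOn x (Set.Icc A B))
    (hd : ∀ t ∈ Set.Ioo A B, t ∉ S → HasDerivAt x m t) :
    ∀ t ∈ Set.Icc A B, x t = x A + m * (t - A) := by
  have hfin' : (S ∩ Set.Ioo A B).Finite :=
    hfin.subset (Set.inter_subset_inter_right S Set.Ioo_subset_Icc_self)
  exact lin_aux x m S (S ∩ Set.Ioo A B).ncard A B hc hfin' le_rfl hd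

private lemma down (a : ℝ) (ha : 0 < a) (x : ℝ → ℝ) (S : Set ℝ)
    (hc : ContinuousOn x (Set.Ici (-1:ℝ)))
    (hSfin : ∀ A B : ℝ, (S ∩ Set.Icc A B).Finite)
    (hder : ∀ t : ℝ, 0 < t → t ∉ S → HasDerivAt x (R a (x (t - 1))) t)
    (p v : ℝ) (hp : 0 ≤ p) (hv : 0 ≤ v)
    (hpos : ∀ s, p - 1 < s → s < p → 0 < x s)
    (hxp : x p = v) :
    ∀ t, p ≤ t → t ≤ p + v / a + 1 → x t = v - a * (t - p) := by
  have hva : 0 ≤ v / a := div_nonneg hv ha.le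
  have hav : a * (v / a) = v := by field_simp
  set L := p + v / a + 1 with hL
  have hpL : p ≤ L := by rw [hL]; linarith
  have key : ∀ k : ℕ, ∀ t, p ≤ t → t ≤ min (p + k) L → x t = v - a * (t - p) := by
    intro k
    induction k with
    | zero =>
      intro t h1 h2
      have hple : t ≤ p := by
        have := le_trans h2 (min_le_left _ _)
        simpa using this
      have : t = p := le_antisymm hple h1
      rw [this, hxp]; ring
    | succ k ih =>
      intro t h1 h2
      push_cast at h2
      set A := min (p + (k:ℝ)) L with hA
      set B := min (p + ((k:ℕ)+1:ℝ)) L with hB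
      have hAp : p ≤ A := le_min (le_add_of_nonneg_right (Nat.cast_nonneg k)) hpL
      have hAB : A ≤ B := min_le_min (by linarith) le_rfl
      have hxA : x A = v - a * (A - p) := ih A hAp le_rfl
      have hfin : ((insert (p+1) S) ∩ Set.Icc A B).Finite := by
        refine ((hSfin A B).insert (p+1)).subset ?_
        rintro y ⟨hy1, hy2⟩
        rcases hy1 with h | h
        · exact Set.mem_insert_iff.mpr (Or.inl h)
        · exact Set.mem_insert_iff.mpr (Or.inr ⟨h, hy2⟩)
      have hcAB : ContinuousOn x (Set.Icc A B) := by
        refine hc.mono ?_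
        intro y hy
        have : (-1:ℝ) ≤ A := by linarith
        exact le_trans this hy.1
      have hdAB : ∀ t ∈ Set.Ioo A B, t ∉ insert (p+1) S → HasDerivAt x (-a) t := by
        intro t htI htS
        have htp : p < t := lt_of_le_of_lt hAp htI.1
        have ht0' : 0 < t := lt_of_le_of_lt hp htp
        have htS' : t ∉ S := fun h => htS (Set.mem_insert_iff.mpr (Or.inr h))
        have htne : t ≠ p + 1 := fun h => htS (by rw [h]; exact Set.mem_insert _ _)
        have htB1 : t < p + (k:ℝ) + 1 := by
          have := lt_of_lt_of_le htI.2 (min_le_left _ _)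
          linarith
        have htL : t < L := lt_of_lt_of_le htI.2 (min_le_right _ _)
        have hpos' : 0 < x (t - 1) := by
          rcases lt_trichotomy (t - 1) p with h | h | h
          · exact hpos _ (by linarith) h
          · exact absurd (by linarith) htne
          · have hub : t - 1 ≤ min (p + (k:ℝ)) L :=
              le_min (by linarith) (by linarith)
            rw [ih (t-1) h.le hub]
            have h5 : t - 1 - p < v / a := by rw [hL] at htL; linarith
            have h6 : a * (t - 1 - p) < a * (v / a) := mul_lt_mul_of_pos_left h5 ha
            rw [hav] at h6
            linarith
        have hR : R a (x (t-1)) = -a := by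
          unfold R
          rw [if_neg (not_le.mpr hpos')]
        have := hder t ht0' htS'
        rwa [hR] at this
      have hlin := lin x (-a) (insert (p+1) S) A B hfin hcAB hdAB
      rcases le_or_gt t A with h | h
      · exact ih t h1 h
      · have := hlin t ⟨h.le, h2⟩
        rw [this, hxA]; ring
  intro t h1 h2
  refine key ⌈t - p⌉₊ t h1 (le_min ?_ h2)
  have := Nat.le_ceil (t - p)
  linarith

private lemma up (a : ℝ) (ha : 0 < a) (x : ℝ → ℝ) (S : Set ℝ)
    (hc : ContinuousOn x (Set.Ici (-1:ℝ)))
    (hSfin : ∀ A B : ℝ, (S ∩ Set.Icc A B).Finite)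
    (hder : ∀ t : ℝ, 0 < t → t ∉ S → HasDerivAt x (R a (x (t - 1))) t)
    (p w : ℝ) (hp : 1 ≤ p) (hw : w ≤ 0)
    (hnp : ∀ s, p - 1 ≤ s → s ≤ p → x s ≤ 0)
    (hxp : x p = w) :
    ∀ t, p ≤ t → t ≤ p + (1 - w) → x t = w + (t - p) := by
  set L := p + (1 - w) with hL
  have hpL : p ≤ L := by rw [hL]; linarith
  have key : ∀ k : ℕ, ∀ t, p ≤ t → t ≤ min (p + k) L → x t = w + (t - p) := by
    intro k
    induction k with
    | zero =>
      intro t h1 h2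
      have hple : t ≤ p := by
        have := le_trans h2 (min_le_left _ _)
        simpa using this
      have : t = p := le_antisymm hple h1
      rw [this, hxp]; ring
    | succ k ih =>
      intro t h1 h2
      push_cast at h2
      set A := min (p + (k:ℝ)) L with hA
      set B := min (p + ((k:ℕ)+1:ℝ)) L with hB
      have hAp : p ≤ A := le_min (le_add_of_nonneg_right (Nat.cast_nonneg k)) hpL
      have hAB : A ≤ B := min_le_min (by linarith) le_rfl
      have hxA : x A = w + (A - p) := ih A hAp le_rfl
      have hcAB : ContinuousOn x (Set.Icc A B) := by
        refine hc.mono ?_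
        intro y hy
        have : (-1:ℝ) ≤ A := by linarith
        exact le_trans this hy.1
      have hdAB : ∀ t ∈ Set.Ioo A B, t ∉ S → HasDerivAt x 1 t := by
        intro t htI htS
        have htp : p < t := lt_of_le_of_lt hAp htI.1
        have ht0' : 0 < t := by linarith
        have htB1 : t < p + (k:ℝ) + 1 := by
          have := lt_of_lt_of_le htI.2 (min_le_left _ _)
          linarith
        have htL : t < L := lt_of_lt_of_le htI.2 (min_le_right _ _)
        have hnp' : x (t - 1) ≤ 0 := by
          rcases le_or_gt (t - 1) p with h | h
          · exact hnp _ (by linarith) h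
          · have hub : t - 1 ≤ min (p + (k:ℝ)) L :=
              le_min (by linarith) (by linarith)
            rw [ih (t-1) h.le hub]
            rw [hL] at htL
            linarith
        have hR : R a (x (t-1)) = 1 := by
          unfold R
          rw [if_pos hnp']
        have := hder t ht0' htS
        rwa [hR] at this
      have hlin := lin x 1 S A B (hSfin A B) hcAB hdAB
      rcases le_or_gt t A with h | h
      · exact ih t h1 h
      · have := hlin t ⟨h.le, h2⟩
        rw [this, hxA]; ring
  intro t h1 h2
  refine key ⌈t - p⌉₊ t h1 (le_min ?_ h2)
  have := Nat.le_ceil (t - p)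
  linarith

/-- a solution with a positive initial function taking the value
`d` (`d ≥ 0`) at `0` coincides with `x0 (t - (a + 1 + d/a))` for all `t ≥ d/a`. -/
theorem stmt_3 (a : ℝ) (ha : 0 < a) (d : ℝ) (hd : 0 ≤ d) (t0 T0 : ℝ)
    (ht0 : t0 = (a + 1) / a) (hT0 : T0 = (a + 1) ^ 2 / a)
    (φ : ℝ → ℝ) (hφc : ContinuousOn φ (Set.Icc (-1 : ℝ) 0))
    (hφpos : ∀ t ∈ Set.Ico (-1 : ℝ) 0, 0 < φ t) (hφ0 : φ 0 = d)
    (x : ℝ → ℝ) (hx : IsSolution a φ x)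
    (x0 : ℝ → ℝ)
    (hx0per : ∀ t : ℝ, x0 (t + T0) = x0 t)
    (hx0a : ∀ t ∈ Set.Icc (0 : ℝ) 1, x0 t = t)
    (hx0b : ∀ t ∈ Set.Icc (1 : ℝ) (t0 + 1), x0 t = -a * (t - t0))
    (hx0c : ∀ t ∈ Set.Icc (t0 + 1) T0, x0 t = t - T0) :
    ∀ t : ℝ, d / a ≤ t → x t = x0 (t - (a + 1 + d / a)) := by
  obtain ⟨hc, hinit, S, hSfin, hder⟩ := hx
  have ha' : a ≠ 0 := ha.ne'
  have hδ : 0 ≤ d / a := div_nonneg hd ha.le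
  have haδ : a * (d / a) = d := by field_simp
  have ht01 : 1 ≤ t0 := by rw [ht0, le_div_iff₀ ha]; linarith
  have hat0 : a * t0 = a + 1 := by rw [ht0]; field_simp
  have hT0t0 : T0 = t0 + a + 1 := by rw [hT0, ht0]; field_simp; ring
  have hT0pos : 0 < T0 := by rw [hT0]; positivity
  have ht0eq : t0 = 1/a + 1 := by rw [ht0]; field_simp; ring
  have E2 : ∀ s : ℝ, t0 + 1 ≤ s → s ≤ T0 + 1 → x0 s = s - T0 := by
    intro s h1 h2
    rcases le_or_gt s T0 with h | h
    · exact hx0c s ⟨h1, h⟩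
    · have hps := hx0per (s - T0)
      rw [show s - T0 + T0 = s by ring] at hps
      rw [hps]
      exact hx0a (s - T0) ⟨by linarith, by linarith⟩
  have padd : ∀ (k : ℕ) (s : ℝ), x0 (s + k * T0) = x0 s := by
    intro k
    induction k with
    | zero => intro s; simp
    | succ k ih =>
      intro s
      have e : s + ((k:ℕ)+1:ℝ) * T0 = (s + k*T0) + T0 := by push_cast; ring
      rw [show ((k+1:ℕ):ℝ) = ((k:ℕ):ℝ)+1 by push_cast; ring, e, hx0per, ih]
  -- Phase 1
  have hx0d : x 0 = d := by rw [hinit 0 ⟨by norm_num, le_rfl⟩, hφ0]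
  have hpos1 : ∀ s, (0:ℝ) - 1 < s → s < 0 → 0 < x s := by
    intro s h1 h2
    rw [hinit s ⟨by linarith, h2.le⟩]
    exact hφpos s ⟨by linarith, h2⟩
  have F1 : ∀ t, 0 ≤ t → t ≤ d/a + 1 → x t = d - a * t := by
    intro t h1 h2
    have := down a ha x S hc hSfin hder 0 d le_rfl hd hpos1 hx0d t h1 (by linarith)
    rw [this]; ring
  -- Phase 2
  have hnp2 : ∀ s, (d/a + 1) - 1 ≤ s → s ≤ d/a + 1 → x s ≤ 0 := by
    intro s h1 h2
    rw [F1 s (by linarith) h2]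
    have h3 : a * (d/a) ≤ a * s := mul_le_mul_of_nonneg_left (by linarith) ha.le
    rw [haδ] at h3
    linarith
  have hxp2 : x (d/a + 1) = -a := by
    rw [F1 _ (by linarith) le_rfl]
    linear_combination -haδ
  have F2 : ∀ t, d/a + 1 ≤ t → t ≤ d/a + 2 + a → x t = t - d/a - a - 1 := by
    intro t h1 h2
    have := up a ha x S hc hSfin hder (d/a+1) (-a) (by linarith) (by linarith) hnp2 hxp2
      t h1 (by linarith)
    rw [this]; ring
  -- The cycle
  have J : ∀ n : ℕ,
      (∀ s, d/a + a + 1 + n*T0 ≤ s → s ≤ d/a + a + 2 + n*T0 →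
        x s = s - (d/a + a + 1 + n*T0)) ∧
      (∀ t, d/a ≤ t → t ≤ d/a + a + 2 + n*T0 → x t = x0 (t - (a + 1 + d/a))) := by
    intro n
    induction n with
    | zero =>
      constructor
      · intro s h1 h2
        push_cast at h1 h2 ⊢
        rw [F2 s (by linarith) (by linarith)]
        ring
      · intro t h1 h2
        push_cast at h2
        have e : t - (a+1+d/a) + T0 = t - d/a + t0 := by rw [hT0t0]; ring
        rw [← hx0per (t - (a+1+d/a)), e]
        rcases le_or_gt t (d/a + 1) with h | h
        · rw [F1 t (by linarith) (by linarith),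
            hx0b _ ⟨by linarith, by linarith⟩]
          linear_combination -haδ
        · rw [F2 t h.le (by linarith),
            E2 _ (by linarith) (by linarith [hT0t0])]
          linarith [hT0t0]
    | succ n ihn =>
      obtain ⟨I1, M1⟩ := ihn
      have hnT : (0:ℝ) ≤ n*T0 := mul_nonneg (Nat.cast_nonneg n) hT0pos.le
      have hpn : (0:ℝ) ≤ d/a + a + 2 + n*T0 := by linarith
      -- down from peak
      have F3 : ∀ t, d/a + a + 2 + n*T0 ≤ t → t ≤ d/a + a + 2 + n*T0 + 1/a + 1 →
          x t = 1 - a*(t - (d/a + a + 2 + n*T0)) := by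
        intro t h1 h2
        have hpos3 : ∀ s, (d/a + a + 2 + n*T0) - 1 < s → s < d/a + a + 2 + n*T0 → 0 < x s := by
          intro s hs1 hs2
          rw [I1 s (by linarith) hs2.le]
          linarith
        have hxp3 : x (d/a + a + 2 + n*T0) = 1 := by
          rw [I1 _ (by linarith) le_rfl]; ring
        have := down a ha x S hc hSfin hder (d/a + a + 2 + n*T0) 1 hpn zero_le_one
          hpos3 hxp3 t h1 h2
        rw [this]
      have F4 : ∀ t, d/a + a + 2 + n*T0 + t0 ≤ t → t ≤ d/a + a + 2 + n*T0 + T0 →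
          x t = t - (d/a + a + 2 + n*T0 + t0) - a := by
        intro t h1 h2
        have hq : (1:ℝ) ≤ d/a + a + 2 + n*T0 + t0 := by linarith
        have hnp4 : ∀ s, (d/a + a + 2 + n*T0 + t0) - 1 ≤ s → s ≤ d/a + a + 2 + n*T0 + t0 →
            x s ≤ 0 := by
          intro s hs1 hs2
          rw [F3 s (by linarith) (by linarith [ht0eq])]
          have h3 : 1/a ≤ s - (d/a + a + 2 + n*T0) := by linarith [ht0eq]
          have h4 : a * (1/a) ≤ a * (s - (d/a + a + 2 + n*T0)) :=
            mul_le_mul_of_nonneg_left h3 ha.le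
          have h5 : a * (1/a) = 1 := by field_simp
          linarith
        have hxq : x (d/a + a + 2 + n*T0 + t0) = -a := by
          rw [F3 _ (by linarith) (by linarith [ht0eq])]
          linear_combination -hat0
        have := up a ha x S hc hSfin hder (d/a + a + 2 + n*T0 + t0) (-a) hq (by linarith)
          hnp4 hxq t h1 (by linarith [hT0t0])
        rw [this]; ring
      constructor
      · intro s h1 h2
        push_cast at h1 h2 ⊢
        rw [F4 s (by linarith [hT0t0]) (by linarith)]
        linarith [hT0t0]
      · intro t h1 h2
        push_cast at h2
        rcases le_or_gt t (d/a + a + 2 + n*T0) with h | h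
        · exact M1 t h1 h
        · have e : t - (a+1+d/a) = (t - (d/a + a + 2 + n*T0) + 1) + n*T0 := by ring
          rw [e, padd n]
          rcases le_or_gt t (d/a + a + 2 + n*T0 + t0) with h3 | h3
          · rw [F3 t h.le (by linarith [ht0eq]),
              hx0b _ ⟨by linarith, by linarith⟩]
            linear_combination -hat0
          · rw [F4 t h3.le (by linarith), E2 _ (by linarith) (by linarith [hT0t0])]
            linarith [hT0t0]
  intro t ht
  obtain ⟨n, hn⟩ := exists_nat_ge ((t - (d/a + a + 2)) / T0)
  have hle : t ≤ d/a + a + 2 + n*T0 := by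
    rw [div_le_iff₀ hT0pos] at hn
    linarith
  exact (J n).2 t ht hle
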